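/- arXiv:2101.02248 — 3 statements merged into one kernel-verified Lean document; each statement's English description precedes it below -/
import Mathlib

section
/- There exist positive constants a and b such that for all sufficiently large x, a·x·log x ≤ ∑_{n ≤ x} φ(⌊x/n⌋) ≤ b·x·log x. -/
open Finset Filter


-- swap identity
lemma key_identity (N : ℕ) :
    ∑ m ∈ Icc 1 N, Nat.totient m * (N / m) = ∑ n ∈ Icc 1 N, n := by
  have h1 : ∀ n ∈ Icc 1 N, (n : ℕ) = ∑ d ∈ (Icc 1 N).filter (· ∣ n), Nat.totient d := by
    intro n hn
    simp only [mem_Icc] at hn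
    have : (Icc 1 N).filter (· ∣ n) = n.divisors := by
      ext d
      simp only [mem_filter, mem_Icc, Nat.mem_divisors]
      constructor
      · rintro ⟨⟨h1, h2⟩, h3⟩; exact ⟨h3, by omega⟩
      · rintro ⟨h3, h4⟩
        have hd1 : 1 ≤ d := Nat.pos_of_dvd_of_pos h3 (by omega)
        have hd2 : d ≤ n := Nat.le_of_dvd (by omega) h3
        exact ⟨⟨hd1, by omega⟩, h3⟩
    rw [this, Nat.sum_totient]
  rw [Finset.sum_congr rfl h1, Finset.sum_comm' (t' := Icc 1 N)
    (s' := fun d => (Icc 1 N).filter (d ∣ ·)) ?_]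
  · refine Finset.sum_congr rfl fun d hd => ?_
    rw [Finset.sum_const, smul_eq_mul, mul_comm]
    congr 1
    have : Icc 1 N = Ioc 0 N := rfl
    rw [this, Nat.Ioc_filter_dvd_card_eq_div]
  · intro x y
    simp only [mem_filter]
    tauto



lemma gauss_Icc (N : ℕ) : (∑ n ∈ Icc 1 N, n) * 2 = N * (N + 1) := by
  induction N with
  | zero => simp
  | succ n ih => rw [Finset.sum_Icc_succ_top (by omega), add_mul, ih]; ring

-- B(N) ≥ (N+1)/2 for N ≥ 1
noncomputable def B (k : ℕ) : ℝ := ∑ m ∈ Icc 1 k, (Nat.totient m : ℝ) / m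

lemma totient_over_id_sum_lb (N : ℕ) (hN : 1 ≤ N) :
    ((N : ℝ) + 1) / 2 ≤ B N := by
  show ((N : ℝ) + 1) / 2 ≤ ∑ m ∈ Icc 1 N, (Nat.totient m : ℝ) / m
  have hNpos : (0:ℝ) < N := by exact_mod_cast hN
  have h1 : ((N:ℝ) * (N+1)) / 2 ≤ ∑ m ∈ Icc 1 N, (Nat.totient m : ℝ) * (N / m) := by
    have h2 : ((∑ m ∈ Icc 1 N, Nat.totient m * (N / m) : ℕ) : ℝ)
        ≤ ∑ m ∈ Icc 1 N, (Nat.totient m : ℝ) * ((N:ℝ) / m) := by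
      push_cast
      refine Finset.sum_le_sum fun m hm => ?_
      have := Nat.cast_div_le (α := ℝ) (m := N) (n := m)
      exact mul_le_mul_of_nonneg_left this (by positivity)
    calc ((N:ℝ) * (N+1)) / 2 = ((∑ n ∈ Icc 1 N, n : ℕ) : ℝ) := by
          have := gauss_Icc N
          have : ((∑ n ∈ Icc 1 N, n : ℕ) : ℝ) * 2 = (N:ℝ) * ((N:ℝ)+1) := by
            exact_mod_cast congrArg (Nat.cast : ℕ → ℝ) this
          linarith
      _ = ((∑ m ∈ Icc 1 N, Nat.totient m * (N / m) : ℕ) : ℝ) := by rw [key_identity]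
      _ ≤ _ := h2
  have h3 : ∑ m ∈ Icc 1 N, (Nat.totient m : ℝ) * ((N:ℝ) / m)
      = (N:ℝ) * ∑ m ∈ Icc 1 N, (Nat.totient m : ℝ) / m := by
    rw [Finset.mul_sum]
    refine Finset.sum_congr rfl fun m hm => ?_
    ring
  rw [h3] at h1
  nlinarith [Finset.sum_nonneg (fun m (_ : m ∈ Icc 1 N) => by positivity : ∀ m ∈ Icc 1 N, (0:ℝ) ≤ (Nat.totient m : ℝ) / m)]



lemma abel_identity (M : ℕ) :
    ∑ m ∈ Icc 1 M, (Nat.totient m : ℝ) / (m * (m + 1)) =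
      B M / (M + 1) + ∑ k ∈ Ico 1 M, B k / ((k + 1) * (k + 2)) := by
  induction M with
  | zero => simp [B]
  | succ n ih =>
    rcases Nat.eq_zero_or_pos n with hn | hn
    · subst hn
      norm_num [B]
    · rw [Finset.sum_Icc_succ_top (by omega : 1 ≤ n + 1),
        Finset.sum_Ico_succ_top (by omega : 1 ≤ n), ih]
      have hB : B (n + 1) = B n + (Nat.totient (n+1) : ℝ) / (n+1) := by
        rw [B, B, Finset.sum_Icc_succ_top (by omega : 1 ≤ n + 1)]; push_cast; ring
      rw [hB]
      have h1 : ((n:ℝ) + 1) ≠ 0 := by positivity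
      have h2 : ((n:ℝ) + 2) ≠ 0 := by positivity
      push_cast
      field_simp
      ring





lemma shift_sum (a b : ℕ) (f : ℕ → ℝ) :
    ∑ i ∈ Icc (a+1) (b+1), f i = ∑ k ∈ Icc a b, f (k+1) := by
  rw [← Finset.map_add_right_Icc a b 1, Finset.sum_map]
  rfl

lemma main_lower_sum (M : ℕ) (hM : 1 ≤ M) :
    (Real.log (M + 2) - 1) / 2 ≤ ∑ m ∈ Icc 1 M, (Nat.totient m : ℝ) / (m * (m + 1)) := by
  rw [abel_identity]
  have h1 : (1:ℝ) / 2 ≤ B M / (M + 1) := by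
    have := totient_over_id_sum_lb M hM
    rw [le_div_iff₀ (by positivity)]
    linarith
  have h2 : ∀ k ∈ Ico 1 M, (1:ℝ)/2 * (1 / (k + 2)) ≤ B k / ((k + 1) * (k + 2)) := by
    intro k hk
    simp only [mem_Ico] at hk
    have hb := totient_over_id_sum_lb k hk.1
    have e1 : (1:ℝ)/2 * (1 / (k + 2)) = (1/2) / (k+2) := by ring
    rw [e1, div_mul_eq_div_div]
    have hmid : (1:ℝ)/2 ≤ B k / (k+1) := by
      rw [le_div_iff₀ (by positivity)]; linarith
    gcongr ?x / _
  have h3 : (1:ℝ)/2 * ∑ k ∈ Ico 1 M, (1:ℝ)/(k+2) ≤ ∑ k ∈ Ico 1 M, B k / ((k + 1) * (k + 2)) := by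
    rw [Finset.mul_sum]
    exact Finset.sum_le_sum h2
  have h4 : Real.log (M + 2) ≤ 1 + (1/2 + ∑ k ∈ Ico 1 M, (1:ℝ)/(k+2)) := by
    have hlog := log_add_one_le_harmonic (M + 1)
    have hh : (harmonic (M+1) : ℝ) = ∑ i ∈ Icc 1 (M+1), (1:ℝ)/i := by
      rw [harmonic_eq_sum_Icc]; push_cast; simp [one_div]
    have hsplit : ∑ i ∈ Icc 1 (M+1), (1:ℝ)/i = 1 + ∑ i ∈ Icc 2 (M+1), (1:ℝ)/i := by
      rw [← Finset.Ico_add_one_right_eq_Icc, Finset.sum_eq_sum_Ico_succ_bot (by omega), Finset.Ico_add_one_right_eq_Icc]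
      norm_num
    have hshift : ∑ i ∈ Icc 2 (M+1), (1:ℝ)/i = ∑ k ∈ Icc 1 M, (1:ℝ)/(k+1) := by
      rw [show (2:ℕ) = 1 + 1 from rfl, shift_sum 1 M (fun i => (1:ℝ)/i)]
      push_cast; rfl
    have hsplit2 : ∑ k ∈ Icc 1 M, (1:ℝ)/(k+1) = 1/2 + ∑ k ∈ Icc 2 M, (1:ℝ)/(k+1) := by
      rw [← Finset.Ico_add_one_right_eq_Icc, Finset.sum_eq_sum_Ico_succ_bot (by omega), Finset.Ico_add_one_right_eq_Icc]
      norm_num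
    have hshift2 : ∑ k ∈ Icc 2 M, (1:ℝ)/(k+1) = ∑ k ∈ Ico 1 M, (1:ℝ)/(k+2) := by
      have hM' : M = (M - 1) + 1 := by omega
      rw [hM', show (2:ℕ) = 1 + 1 from rfl, shift_sum 1 (M-1) (fun i => (1:ℝ)/(i+1)),
        ← Finset.Ico_add_one_right_eq_Icc]
      push_cast
      refine Finset.sum_congr rfl fun k _ => ?_
      ring_nf
    push_cast at hlog
    rw [hh, hsplit, hshift, hsplit2, hshift2] at hlog
    have : ((M:ℝ) + 1 + 1) = (M:ℝ) + 2 := by ring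
    rw [this] at hlog
    linarith
  linarith


lemma fiber_eq (N m : ℕ) (hm : 1 ≤ m) :
    (Icc 1 N).filter (fun n => N / n = m) = Ioc (N/(m+1)) (N/m) := by
  ext n
  simp only [mem_filter, mem_Icc, mem_Ioc]
  constructor
  · rintro ⟨⟨hn1, hnN⟩, hdiv⟩
    constructor
    · rw [Nat.div_lt_iff_lt_mul (by omega)]
      have : N / n < m + 1 := by omega
      rw [Nat.div_lt_iff_lt_mul (by omega)] at this
      rw [Nat.mul_comm] at this
      omega
    · rw [Nat.le_div_iff_mul_le (by omega)]
      have : m ≤ N / n := by omega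
      rw [Nat.le_div_iff_mul_le (by omega), Nat.mul_comm] at this
      omega
  · rintro ⟨hlt, hle⟩
    have hn1 : 1 ≤ n := by
      by_contra h
      interval_cases n <;> simp_all
    have h1 : m * n ≤ N := by
      rw [Nat.le_div_iff_mul_le (by omega), Nat.mul_comm] at hle
      omega
    have h2 : N < (m+1) * n := by
      rw [Nat.div_lt_iff_lt_mul (by omega), Nat.mul_comm] at hlt
      omega
    have hnN : n ≤ N := by nlinarith
    have hge : m ≤ N / n := by rw [Nat.le_div_iff_mul_le (by omega)]; omega
    have hlt2 : N / n < m + 1 := by rw [Nat.div_lt_iff_lt_mul (by omega)]; omega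
    exact ⟨⟨hn1, hnN⟩, by omega⟩

lemma lower_group (N M : ℕ) :
    ∑ m ∈ Icc 1 M, (N/m - N/(m+1)) * Nat.totient m ≤ ∑ n ∈ Icc 1 N, Nat.totient (N/n) := by
  classical
  set s := (Icc 1 N).filter (fun n => 1 ≤ N/n ∧ N/n ≤ M) with hs
  have hmaps : ∀ n ∈ s, N/n ∈ Icc 1 M := by
    intro n hn
    simp only [hs, mem_filter, mem_Icc] at hn ⊢
    exact hn.2
  have hfib := Finset.sum_fiberwise_of_maps_to hmaps (fun n => Nat.totient (N/n))
  have hsub : ∑ n ∈ s, Nat.totient (N/n) ≤ ∑ n ∈ Icc 1 N, Nat.totient (N/n) :=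
    Finset.sum_le_sum_of_subset (Finset.filter_subset _ _)
  rw [← hfib] at hsub
  refine le_trans (le_of_eq ?_) hsub
  refine Finset.sum_congr rfl fun m hm => ?_
  simp only [mem_Icc] at hm
  have hfeq : s.filter (fun n => N/n = m) = Ioc (N/(m+1)) (N/m) := by
    rw [← fiber_eq N m hm.1]
    ext n
    simp only [hs, mem_filter, mem_Icc]
    constructor
    · rintro ⟨⟨h1, _⟩, h2⟩; exact ⟨h1, h2⟩
    · rintro ⟨h1, h2⟩; exact ⟨⟨h1, by omega⟩, h2⟩
  rw [hfeq]
  have : ∀ n ∈ Ioc (N/(m+1)) (N/m), Nat.totient (N/n) = Nat.totient m := by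
    intro n hn
    rw [← fiber_eq N m hm.1] at hn
    simp only [mem_filter] at hn
    rw [hn.2]
  rw [Finset.sum_congr rfl this, Finset.sum_const, Nat.card_Ioc, smul_eq_mul]




lemma count_lb (N m : ℕ) (hm : 1 ≤ m) (h2 : 2*(m*(m+1)) ≤ N) :
    (N:ℝ)/(2*(m*(m+1))) ≤ ((N/m - N/(m+1) : ℕ) : ℝ) := by
  have hmR : (1:ℝ) ≤ m := by exact_mod_cast hm
  have hd : (0:ℝ) < (m:ℝ)*((m:ℝ)+1) := by positivity
  have hle : N/(m+1) ≤ N/m := Nat.div_le_div_left (by omega) (by omega)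
  rw [Nat.cast_sub hle]
  have hA : (N:ℝ)/m - 1 ≤ ((N/m : ℕ) : ℝ) := by
    have h : N < (N/m + 1) * m := by
      calc N = m*(N/m) + N%m := (Nat.div_add_mod N m).symm
        _ < m*(N/m) + m := by have := Nat.mod_lt N (show 0 < m by omega); omega
        _ = (N/m+1)*m := by ring
    have : (N:ℝ) < ((N/m : ℕ) + 1) * m := by exact_mod_cast h
    rw [sub_le_iff_le_add, div_le_iff₀ (by positivity : (0:ℝ) < (m:ℝ))]
    nlinarith
  have hB : ((N/(m+1) : ℕ) : ℝ) ≤ (N:ℝ)/((m:ℝ)+1) := by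
    have := Nat.cast_div_le (α := ℝ) (m := N) (n := m+1)
    push_cast at this
    exact this
  have hsub : (N:ℝ)/m - (N:ℝ)/((m:ℝ)+1) = (N:ℝ)/((m:ℝ)*((m:ℝ)+1)) := by
    field_simp
    ring
  have h2R : 2*((m:ℝ)*((m:ℝ)+1)) ≤ (N:ℝ) := by exact_mod_cast h2
  have h1le : (1:ℝ) ≤ (N:ℝ)/(2*((m:ℝ)*((m:ℝ)+1))) := by
    rw [le_div_iff₀ (by positivity)]
    linarith
  have hdbl : (N:ℝ)/((m:ℝ)*((m:ℝ)+1)) = 2 * ((N:ℝ)/(2*((m:ℝ)*((m:ℝ)+1)))) := by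
    field_simp
  linarith [hA, hB, hsub.symm ▸ (by linarith [h1le, hdbl] : (N:ℝ)/(2*((m:ℝ)*((m:ℝ)+1))) + 1 ≤ (N:ℝ)/((m:ℝ)*((m:ℝ)+1)))]

lemma lower_real (N : ℕ) (hN : 16 ≤ N) :
    (N:ℝ)/2 * ((Real.log ((Nat.sqrt N / 2 : ℕ) + 2) - 1)/2)
      ≤ ∑ n ∈ Icc 1 N, (Nat.totient (N/n) : ℝ) := by
  set M := Nat.sqrt N / 2 with hMdef
  have hsq : 4 ≤ Nat.sqrt N := by
    have : Nat.sqrt 16 = 4 := by norm_num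
    calc 4 = Nat.sqrt 16 := this.symm
      _ ≤ Nat.sqrt N := Nat.sqrt_le_sqrt hN
  have hM1 : 1 ≤ M := by omega
  have hcond : ∀ m, 1 ≤ m → m ≤ M → 2*(m*(m+1)) ≤ N := by
    intro m h1 h2
    have h4 : 2*M ≤ Nat.sqrt N := by omega
    have := Nat.sqrt_le' N  -- sqrt N * sqrt N ≤ N
    nlinarith [Nat.sqrt_le N]
  -- step 1: real sum vs grouped nat sum
  have step1 : ∑ m ∈ Icc 1 M, (N:ℝ)/2 * ((Nat.totient m : ℝ)/(m*(m+1)))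
      ≤ ((∑ m ∈ Icc 1 M, (N/m - N/(m+1)) * Nat.totient m : ℕ) : ℝ) := by
    push_cast
    refine Finset.sum_le_sum fun m hm => ?_
    simp only [mem_Icc] at hm
    have hc := count_lb N m hm.1 (hcond m hm.1 hm.2)
    rw [Nat.cast_sub (Nat.div_le_div_left (by omega) (by omega))] at hc
    rw [Nat.cast_sub (Nat.div_le_div_left (by omega) (by omega))]
    have hphi : (0:ℝ) ≤ (Nat.totient m : ℝ) := by positivity
    have : (N:ℝ)/2 * ((Nat.totient m : ℝ)/(m*(m+1)))
        = (N:ℝ)/(2*(m*(m+1))) * (Nat.totient m) := by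
      field_simp
    rw [this]
    exact mul_le_mul_of_nonneg_right hc hphi
  have step2 : ((∑ m ∈ Icc 1 M, (N/m - N/(m+1)) * Nat.totient m : ℕ) : ℝ)
      ≤ ∑ n ∈ Icc 1 N, (Nat.totient (N/n) : ℝ) := by
    have := lower_group N M
    push_cast
    exact_mod_cast this
  have step3 : (N:ℝ)/2 * ((Real.log (M + 2) - 1)/2)
      ≤ ∑ m ∈ Icc 1 M, (N:ℝ)/2 * ((Nat.totient m : ℝ)/(m*(m+1))) := by
    rw [← Finset.mul_sum]
    have := main_lower_sum M hM1
    have hN2 : (0:ℝ) ≤ (N:ℝ)/2 := by positivity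
    exact mul_le_mul_of_nonneg_left this hN2
  calc (N:ℝ)/2 * ((Real.log ((M:ℕ) + 2) - 1)/2)
      = (N:ℝ)/2 * ((Real.log ((M:ℝ) + 2) - 1)/2) := by push_cast; ring_nf
    _ ≤ _ := le_trans step3 (le_trans step1 step2)



theorem sum_totient_floor_div_bounds :
    ∃ a > (0 : ℝ), ∃ b > (0 : ℝ), ∀ᶠ x : ℝ in atTop,
      a * x * Real.log x ≤ ∑ n ∈ Finset.Icc 1 ⌊x⌋₊, (Nat.totient ⌊x / (n : ℝ)⌋₊ : ℝ) ∧
      ∑ n ∈ Finset.Icc 1 ⌊x⌋₊, (Nat.totient ⌊x / (n : ℝ)⌋₊ : ℝ) ≤ b * x * Real.log x := by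
  refine ⟨1/32, by norm_num, 2, by norm_num, ?_⟩
  filter_upwards [eventually_ge_atTop (max (Real.exp 12) 17)] with x hx
  have hx17 : (17:ℝ) ≤ x := le_trans (le_max_right _ _) hx
  have hxe : Real.exp 12 ≤ x := le_trans (le_max_left _ _) hx
  have hx0 : (0:ℝ) < x := by linarith
  have hlogx : (12:ℝ) ≤ Real.log x := by
    rw [← Real.log_exp 12]
    exact Real.log_le_log (Real.exp_pos 12) hxe
  set N := ⌊x⌋₊ with hNdef
  have hN16 : 16 ≤ N := Nat.le_floor (by push_cast; linarith)
  have hNx : (N:ℝ) ≤ x := Nat.floor_le hx0.le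
  have hxN : x - 1 ≤ (N:ℝ) := by
    have := Nat.lt_floor_add_one x
    linarith
  have hNhalf : x/2 ≤ (N:ℝ) := by linarith
  have hsum : ∑ n ∈ Finset.Icc 1 N, (Nat.totient ⌊x / (n : ℝ)⌋₊ : ℝ)
      = ∑ n ∈ Icc 1 N, (Nat.totient (N/n) : ℝ) := by
    refine Finset.sum_congr rfl fun n _ => ?_
    rw [Nat.floor_div_natCast x n]
  rw [hsum]
  constructor
  · -- LOWER BOUND
    refine le_trans ?_ (lower_real N hN16)
    set M := Nat.sqrt N / 2 with hMdef
    have hsq4 : 4 ≤ Nat.sqrt N := by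
      calc 4 = Nat.sqrt 16 := by norm_num
        _ ≤ Nat.sqrt N := Nat.sqrt_le_sqrt hN16
    have hMr : ((Nat.sqrt N : ℝ) - 1)/2 ≤ (M:ℝ) := by
      have h : Nat.sqrt N ≤ 2 * M + 1 := by omega
      have h2 := (Nat.cast_le (α := ℝ)).mpr h
      push_cast at h2
      linarith
    have hsqrtN : Real.sqrt N ≤ (Nat.sqrt N : ℝ) + 1 := by
      have h1 : N < (Nat.sqrt N + 1)^2 := Nat.lt_succ_sqrt' N
      have h2 : (N:ℝ) < ((Nat.sqrt N : ℝ) + 1)^2 := by exact_mod_cast h1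
      nlinarith [Real.sq_sqrt (by positivity : (0:ℝ) ≤ (N:ℝ)), Real.sqrt_nonneg (N:ℝ)]
    have hM2 : Real.sqrt (N:ℝ) / 2 ≤ (M:ℝ) + 2 := by linarith
    have hsx : Real.sqrt (x/2) ≤ Real.sqrt (N:ℝ) := Real.sqrt_le_sqrt hNhalf
    have hlogM : (1/2) * Real.log x - 2 ≤ Real.log ((M:ℝ) + 2) := by
      have h0 : (0:ℝ) < Real.sqrt (x/2)/2 := by
        have : (0:ℝ) < Real.sqrt (x/2) := Real.sqrt_pos.mpr (by linarith)
        linarith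
      have hmono : Real.log (Real.sqrt (x/2)/2) ≤ Real.log ((M:ℝ)+2) :=
        Real.log_le_log h0 (by linarith)
      have heq : Real.log (Real.sqrt (x/2)/2) = Real.log (x/2)/2 - Real.log 2 := by
        rw [Real.log_div (by positivity) (by norm_num), Real.log_sqrt (by positivity)]
      have heq2 : Real.log (x/2) = Real.log x - Real.log 2 :=
        Real.log_div hx0.ne' (by norm_num)
      have hl2 : Real.log 2 < 1 := by
        have := Real.log_two_lt_d9
        linarith
      linarith
    have h1 : (1/4)*Real.log x ≤ Real.log ((M:ℝ)+2) - 1 := by linarith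
    calc (1/32)*x*Real.log x = (x/2/2) * (((1/4)*Real.log x)/2) := by ring
      _ ≤ ((N:ℝ)/2) * ((Real.log ((M:ℝ)+2) - 1)/2) := by
          apply mul_le_mul (by linarith) (by linarith) (by linarith) (by positivity)
  · -- UPPER BOUND
    have hN1 : (1:ℝ) ≤ (N:ℝ) := by exact_mod_cast Nat.one_le_iff_ne_zero.mpr (by omega)
    have h1 : ∑ n ∈ Icc 1 N, (Nat.totient (N/n) : ℝ) ≤ ∑ n ∈ Icc 1 N, (N:ℝ)/n := by
      refine Finset.sum_le_sum fun n hn => ?_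
      calc (Nat.totient (N/n) : ℝ) ≤ ((N/n : ℕ) : ℝ) := by exact_mod_cast Nat.totient_le _
        _ ≤ (N:ℝ)/n := Nat.cast_div_le
    have h2 : ∑ n ∈ Icc 1 N, (N:ℝ)/n = (N:ℝ) * ∑ n ∈ Icc 1 N, (1:ℝ)/n := by
      rw [Finset.mul_sum]; exact Finset.sum_congr rfl fun n _ => by ring
    have h3 : ∑ n ∈ Icc 1 N, (1:ℝ)/n ≤ 1 + Real.log N := by
      have hhar := harmonic_le_one_add_log N
      have hh : (harmonic N : ℝ) = ∑ i ∈ Icc 1 N, (1:ℝ)/i := by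
        rw [harmonic_eq_sum_Icc]; push_cast; simp [one_div]
      rw [hh] at hhar
      exact hhar
    have hlogN : Real.log N ≤ Real.log x := Real.log_le_log (by linarith) hNx
    have hlogN0 : (0:ℝ) ≤ Real.log N := Real.log_nonneg hN1
    calc ∑ n ∈ Icc 1 N, (Nat.totient (N/n) : ℝ)
        ≤ (N:ℝ) * (1 + Real.log N) := by
          rw [h2] at h1
          exact h1.trans (mul_le_mul_of_nonneg_left h3 (by linarith))
      _ ≤ x * (1 + Real.log x) := by nlinarith
      _ ≤ 2 * x * Real.log x := by nlinarith
end

section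
/- For x ≥ 2, the partial sum ∑_{n ≤ x} μ²(n)/n² equals ζ(2)/ζ(4) + O(1/x), where ζ(2)/ζ(4) = 15/π². -/
open Finset Filter Asymptotics Real

noncomputable def sqf (n : ℕ) : ℝ := (if Squarefree n then 1 else 0 : ℝ) / (n : ℝ) ^ 2

lemma sqf_nonneg (n : ℕ) : 0 ≤ sqf n := by
  unfold sqf; split_ifs <;> positivity

lemma sqf_le (n : ℕ) : sqf n ≤ 1 / (n : ℝ) ^ 2 := by
  unfold sqf; split_ifs
  · exact le_rfl
  · rw [zero_div]; positivity

lemma sqf_summable : Summable sqf :=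
  Summable.of_nonneg_of_le sqf_nonneg sqf_le hasSum_zeta_two.summable

lemma sq_mul_squarefree_inj {b₁ a₁ b₂ a₂ : ℕ} (hb₁ : b₁ ≠ 0) (hb₂ : b₂ ≠ 0)
    (ha₁ : Squarefree a₁) (ha₂ : Squarefree a₂) (h : b₁ ^ 2 * a₁ = b₂ ^ 2 * a₂) :
    b₁ = b₂ ∧ a₁ = a₂ := by
  have ha₁0 : a₁ ≠ 0 := ha₁.ne_zero
  have ha₂0 : a₂ ≠ 0 := ha₂.ne_zero
  have key : ∀ p : ℕ, a₁.factorization p = a₂.factorization p ∧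
      b₁.factorization p = b₂.factorization p := by
    intro p
    have h1 := congrArg (fun m : ℕ => m.factorization p) h
    simp only [Nat.factorization_mul (pow_ne_zero 2 hb₁) ha₁0,
      Nat.factorization_mul (pow_ne_zero 2 hb₂) ha₂0, Nat.factorization_pow,
      Finsupp.add_apply, Finsupp.smul_apply, smul_eq_mul] at h1
    have e1 : a₁.factorization p ≤ 1 := ha₁.natFactorization_le_one p
    have e2 : a₂.factorization p ≤ 1 := ha₂.natFactorization_le_one p
    omega
  exact ⟨Nat.eq_of_factorization_eq hb₁ hb₂ fun p => (key p).2,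
    Nat.eq_of_factorization_eq ha₁0 ha₂0 fun p => (key p).1⟩

lemma key_eq : (π ^ 4 / 90) * (∑' n, sqf n) = π ^ 2 / 6 := by
  set g : ℕ × ℕ → ℝ := fun p => (1 / (p.1 : ℝ) ^ 4) * sqf p.2 with hg
  have hT : HasSum sqf (∑' n, sqf n) := sqf_summable.hasSum
  have hprod : Summable g :=
    hasSum_zeta_four.summable.mul_of_nonneg sqf_summable
      (fun n => by positivity) sqf_nonneg
  have hmul : HasSum g ((π ^ 4 / 90) * ∑' n, sqf n) := hasSum_zeta_four.mul hT hprod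
  -- properties of points in the support of g
  have hsupp : ∀ p : ℕ × ℕ, p ∈ Function.support g → p.1 ≠ 0 ∧ Squarefree p.2 := by
    intro p hp
    simp only [Function.mem_support, hg, mul_ne_zero_iff] at hp
    constructor
    · intro h0
      rw [h0] at hp
      simp at hp
    · by_contra hc
      have : sqf p.2 = 0 := by unfold sqf; rw [if_neg hc]; simp
      exact hp.2 this
  have hbij := hasSum_iff_hasSum_of_ne_zero_bij
    (f := fun n : ℕ => 1 / (n : ℝ) ^ 2) (g := g)
    (a := (π ^ 4 / 90) * ∑' n, sqf n)
    (fun p => (p.val.1) ^ 2 * p.val.2)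
    (by
      rintro ⟨⟨b₁, a₁⟩, h₁⟩ ⟨⟨b₂, a₂⟩, h₂⟩ h
      obtain ⟨hb₁, ha₁⟩ := hsupp _ h₁
      obtain ⟨hb₂, ha₂⟩ := hsupp _ h₂
      obtain ⟨hb, ha⟩ := sq_mul_squarefree_inj hb₁ hb₂ ha₁ ha₂ h
      simp_all)
    (by
      intro n hn
      have hn0 : n ≠ 0 := by
        simp only [Function.mem_support] at hn
        intro h0; rw [h0] at hn; simp at hn
      obtain ⟨a, b, ha, hb, hab, hsq⟩ := Nat.sq_mul_squarefree_of_pos (Nat.pos_of_ne_zero hn0)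
      refine ⟨⟨(b, a), ?_⟩, hab⟩
      simp only [Function.mem_support, hg, mul_ne_zero_iff]
      constructor
      · have : (b : ℝ) ≠ 0 := Nat.cast_ne_zero.mpr hb.ne'
        positivity
      · unfold sqf
        rw [if_pos hsq]
        have : (a : ℝ) ≠ 0 := Nat.cast_ne_zero.mpr ha.ne'
        positivity)
    (by
      rintro ⟨⟨b, a⟩, hp⟩
      obtain ⟨hb, ha⟩ := hsupp _ hp
      have hb' : (b : ℝ) ≠ 0 := Nat.cast_ne_zero.mpr hb
      have ha' : (a : ℝ) ≠ 0 := Nat.cast_ne_zero.mpr ha.ne_zero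
      simp only [hg]
      unfold sqf
      rw [if_pos ha]
      push_cast
      field_simp)
  exact (hasSum_zeta_two.unique (hbij.mpr hmul)).symm

lemma tsum_sqf : (∑' n, sqf n) = 15 / π ^ 2 := by
  have hpi : (π : ℝ) ≠ 0 := Real.pi_ne_zero
  have h90 : (π : ℝ) ^ 4 / 90 ≠ 0 := by positivity
  have : (π ^ 4 / 90) * (15 / π ^ 2) = π ^ 2 / 6 := by
    field_simp; ring
  exact mul_left_cancel₀ h90 (key_eq.trans this.symm)

lemma tail_le {N : ℕ} (hN : N ≠ 0) :
    (∑' k : ℕ, sqf (k + (N + 1))) ≤ (N : ℝ)⁻¹ := by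
  apply Real.tsum_le_of_sum_range_le (fun n => sqf_nonneg _)
  intro n
  calc ∑ k ∈ range n, sqf (k + (N + 1))
      ≤ ∑ k ∈ range n, (((k + (N + 1) : ℕ) : ℝ) ^ 2)⁻¹ := by
        apply Finset.sum_le_sum
        intro k _
        simpa [one_div] using sqf_le (k + (N + 1))
    _ = ∑ i ∈ Ioc N (N + n), ((i : ℝ) ^ 2)⁻¹ := by
        rw [← Finset.Ico_add_one_add_one_eq_Ioc, Finset.sum_Ico_eq_sum_range]
        apply Finset.sum_congr (by congr 1; omega)
        intro k _
        congr 1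
        push_cast
        ring
    _ ≤ (N : ℝ)⁻¹ - ((N + n : ℕ) : ℝ)⁻¹ := sum_Ioc_inv_sq_le_sub hN (by omega)
    _ ≤ (N : ℝ)⁻¹ := by
        have : (0 : ℝ) ≤ ((N + n : ℕ) : ℝ)⁻¹ := by positivity
        linarith

theorem sum_squarefree_div_sq :
    riemannZeta 2 / riemannZeta 4 = (15 / Real.pi ^ 2 : ℂ) ∧
    (fun x : ℝ => (∑ n ∈ Finset.Icc 1 ⌊x⌋₊,
        ((if Squarefree n then 1 else 0 : ℝ)) / (n : ℝ) ^ 2) -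
      15 / Real.pi ^ 2) =O[atTop] (fun x : ℝ => 1 / x) := by
  have hpi : (π : ℝ) ≠ 0 := Real.pi_ne_zero
  constructor
  · rw [riemannZeta_two, riemannZeta_four]
    have hpic : (π : ℂ) ≠ 0 := by exact_mod_cast hpi
    field_simp
    ring
  · rw [isBigO_iff]
    refine ⟨2, ?_⟩
    filter_upwards [eventually_ge_atTop (2 : ℝ)] with x hx
    have hx0 : (0 : ℝ) < x := by linarith
    set N := ⌊x⌋₊ with hNdef
    have hN1 : 1 ≤ N := Nat.le_floor (by norm_num; linarith)
    have hNx : (N : ℝ) ≤ x := Nat.floor_le hx0.le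
    have hxN : x < N + 1 := Nat.lt_floor_add_one x
    have hN0 : N ≠ 0 := by omega
    -- partial sum over Icc 1 N equals sum over range (N+1)
    have hIcc : ∑ n ∈ Icc 1 N, sqf n = ∑ n ∈ range (N + 1), sqf n := by
      rw [show range (N + 1) = insert 0 (Icc 1 N) by ext m; simp; omega,
        Finset.sum_insert (by simp)]
      simp [sqf]
    have hsplit := Summable.sum_add_tsum_nat_add (N + 1) sqf_summable
    have htail0 : 0 ≤ ∑' k : ℕ, sqf (k + (N + 1)) :=
      tsum_nonneg fun k => sqf_nonneg _
    have htail : (∑' k : ℕ, sqf (k + (N + 1))) ≤ (N : ℝ)⁻¹ := tail_le hN0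
    have hsum_eq : (∑ n ∈ Icc 1 N, sqf n) - 15 / π ^ 2 = -(∑' k : ℕ, sqf (k + (N + 1))) := by
      rw [hIcc, ← tsum_sqf, ← hsplit]
      ring
    have hfun : (∑ n ∈ Finset.Icc 1 N, ((if Squarefree n then 1 else 0 : ℝ)) / (n : ℝ) ^ 2)
        = ∑ n ∈ Icc 1 N, sqf n := rfl
    rw [Real.norm_eq_abs, Real.norm_eq_abs, hfun, hsum_eq, abs_neg,
      abs_of_nonneg htail0, abs_of_pos (by positivity : (0:ℝ) < 1 / x)]
    calc (∑' k : ℕ, sqf (k + (N + 1))) ≤ (N : ℝ)⁻¹ := htail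
      _ ≤ 2 * (1 / x) := by
          rw [inv_le_iff_one_le_mul₀ (by exact_mod_cast Nat.pos_of_ne_zero hN0)]
          have hN1' : (1 : ℝ) ≤ N := by exact_mod_cast hN1
          have : x ≤ 2 * N := by linarith
          rw [mul_one_div, div_mul_eq_mul_div, le_div_iff₀ hx0]
          linarith
end

section
/- For a large real number x, x·∑_{d ≤ x} (μ²(d)/d²) · ∑_{m ≤ x/d} 1/m = (15/π²)·x·log x + O(x). -/
open Finset Filter Asymptotics

section aux

open ArithmeticFunction LSeries Complex
open scoped LSeries.notation Real
open scoped ArithmeticFunction.Moebius ArithmeticFunction.zeta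


lemma sq_dvd_iff {n b a d : ℕ} (hn : n ≠ 0) (hab : b ^ 2 * a = n) (ha : Squarefree a) :
    d ^ 2 ∣ n ↔ d ∣ b := by
  subst hab
  have hb : b ≠ 0 := by rintro rfl; simp at hn
  have ha0 : a ≠ 0 := by rintro rfl; simp at hn
  constructor
  · intro h
    have hd : d ≠ 0 := by
      rintro rfl
      rw [zero_pow (by norm_num), zero_dvd_iff] at h
      exact hn h
    rw [← Nat.factorization_le_iff_dvd hd hb]
    intro p
    have h2 := (Nat.factorization_le_iff_dvd (pow_ne_zero 2 hd) hn).mpr h p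
    rw [Nat.factorization_mul (pow_ne_zero 2 hb) ha0, Nat.factorization_pow,
      Nat.factorization_pow] at h2
    have h3 : a.factorization p ≤ 1 := ha.natFactorization_le_one p
    simp only [Finsupp.coe_add, Finsupp.coe_smul, Pi.add_apply, Pi.smul_apply,
      smul_eq_mul] at h2
    omega
  · intro h
    exact dvd_mul_of_dvd_left (pow_dvd_pow_of_dvd h 2) a

noncomputable def gsq : ℕ → ℂ := fun k => if k.sqrt ^ 2 = k then (μ k.sqrt : ℂ) else 0

lemma gsq_sq (d : ℕ) : gsq (d ^ 2) = (μ d : ℂ) := by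
  simp [gsq, Nat.sqrt_eq']

lemma sum_divisors_moebius {b : ℕ} (hb : b ≠ 0) :
    ∑ d ∈ b.divisors, (μ d : ℂ) = (if b = 1 then 1 else 0 : ℂ) := by
  have h := congrArg (fun f : ArithmeticFunction ℤ => f b) moebius_mul_coe_zeta
  simp only [coe_mul_zeta_apply, one_apply] at h
  rw [show (∑ d ∈ b.divisors, (μ d : ℂ)) = ((∑ d ∈ b.divisors, μ d : ℤ) : ℂ) by push_cast; rfl,
    h]
  split <;> simp

lemma sum_divisors_gsq {n : ℕ} (hn : n ≠ 0) :
    ∑ k ∈ n.divisors, gsq k = (if Squarefree n then 1 else 0 : ℂ) := by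
  obtain ⟨a, b, hab, ha⟩ := Nat.sq_mul_squarefree n
  have hb : b ≠ 0 := by rintro rfl; rw [← hab] at hn; simp at hn
  have hsub : b.divisors.image (· ^ 2) ⊆ n.divisors := by
    intro k hk
    simp only [mem_image, Nat.mem_divisors] at hk ⊢
    obtain ⟨d, ⟨hd, -⟩, rfl⟩ := hk
    exact ⟨(sq_dvd_iff hn hab ha).mpr hd, hn⟩
  have hvanish : ∀ k ∈ n.divisors, k ∉ b.divisors.image (· ^ 2) → gsq k = 0 := by
    intro k hk hki
    by_contra hg
    have hksq : k.sqrt ^ 2 = k := by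
      by_contra h'; exact hg (by simp [gsq, h'])
    apply hki
    simp only [mem_image, Nat.mem_divisors]
    refine ⟨k.sqrt, ⟨?_, hb⟩, hksq⟩
    rw [← sq_dvd_iff hn hab ha, hksq]
    exact (Nat.mem_divisors.mp hk).1
  rw [← Finset.sum_subset hsub hvanish,
    Finset.sum_image (fun i _ j _ h => Nat.pow_left_injective (by norm_num) h)]
  simp only [gsq_sq]
  rw [sum_divisors_moebius hb]
  congr 1
  have hsf : Squarefree n ↔ b = 1 := by
    constructor
    · intro hsn
      by_contra hb1
      obtain ⟨p, hp⟩ := Nat.exists_prime_and_dvd hb1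
      have : p * p ∣ n := by
        rw [← hab]
        exact dvd_mul_of_dvd_left (by rw [sq]; exact mul_dvd_mul hp.2 hp.2) a
      exact Nat.squarefree_iff_prime_squarefree.mp hsn p hp.1 this
    · intro h; rw [← hab, h]; simpa using ha
  simp [hsf]

-- value of L μ at 4
lemma Lmu4 : LSeriesHasSum ↗μ 4 (90 / (π:ℂ) ^ 4) := by
  have h4 : (1:ℝ) < (4:ℂ).re := by norm_num
  have hsum : LSeriesSummable ↗μ 4 := LSeriesSummable_moebius_iff.mpr h4
  have hz : L ↗ζ 4 * L ↗μ 4 = 1 := LSeries_zeta_mul_Lseries_moebius h4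
  rw [LSeries_zeta_eq_riemannZeta h4, riemannZeta_four] at hz
  have hπ : (π:ℂ) ≠ 0 := by exact_mod_cast Real.pi_ne_zero
  have : L ↗μ 4 = 90 / (π:ℂ) ^ 4 := by
    rw [eq_div_iff (pow_ne_zero 4 hπ)]
    linear_combination (90:ℂ) * hz
  exact this ▸ hsum.LSeriesHasSum

lemma term_gsq_sq (d : ℕ) : term gsq 2 (d ^ 2) = term ↗μ 4 d := by
  rcases eq_or_ne d 0 with rfl | hd
  · simp [term]
  · rw [term_of_ne_zero (pow_ne_zero 2 hd), term_of_ne_zero hd]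
    have : gsq (d ^ 2) = (μ d : ℂ) := by simp [gsq, Nat.sqrt_eq']
    rw [this]
    congr 1
    push_cast
    rw [show (4:ℂ) = ((4:ℕ):ℂ) by norm_num, show (2:ℂ) = ((2:ℕ):ℂ) by norm_num,
      cpow_natCast, cpow_natCast]
    ring

lemma Lgsq : LSeriesHasSum gsq 2 (90 / (π:ℂ) ^ 4) := by
  have hinj : Function.Injective (fun d : ℕ => d ^ 2) :=
    fun i j h => Nat.pow_left_injective (by norm_num) h
  have hvan : ∀ k ∉ Set.range (fun d : ℕ => d ^ 2), term gsq 2 k = 0 := by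
    intro k hk
    have hk0 : k ≠ 0 := by rintro rfl; exact hk ⟨0, by norm_num⟩
    have : ¬ (k.sqrt ^ 2 = k) := fun h => hk ⟨k.sqrt, h⟩
    rw [term_of_ne_zero hk0]
    simp [gsq, this]
  show HasSum (term gsq 2) _
  refine (hinj.hasSum_iff hvan).mp ?_
  have he : (term gsq 2 ∘ fun d : ℕ => d ^ 2) = term ↗μ 4 := funext term_gsq_sq
  rw [he]
  exact Lmu4

lemma LSeriesHasSum_sf :
    LSeriesHasSum (fun n => (if Squarefree n then 1 else 0 : ℂ)) 2 ((15 : ℂ) / (π:ℂ) ^ 2) := by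
  have h2 : (1:ℝ) < (2:ℂ).re := by norm_num
  have hζ : LSeriesSummable ↗ζ 2 := LSeriesSummable_zeta_iff.mpr h2
  have hζv : LSeriesHasSum ↗ζ 2 ((π:ℂ)^2/6) := by
    have := LSeriesHasSum_zeta h2
    rwa [riemannZeta_two] at this
  have hconv := Lgsq.convolution hζv
  have heq : gsq ⍟ ↗ζ = fun n => (if Squarefree n then 1 else 0 : ℂ) := by
    funext n
    rcases eq_or_ne n 0 with rfl | hn
    · rw [convolution_map_zero]
      simp [not_squarefree_zero]
    · rw [convolution_def]
      show ∑ p ∈ n.divisorsAntidiagonal, gsq p.1 * ↗ζ p.2 = _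
      rw [Nat.sum_divisorsAntidiagonal (f := fun k m => gsq k * ↗ζ m)]
      rw [← sum_divisors_gsq hn]
      refine Finset.sum_congr rfl fun k hk => ?_
      have hk1 : 0 < k := Nat.pos_of_mem_divisors hk
      have hkn : k ≤ n := Nat.le_of_dvd (Nat.pos_of_ne_zero hn) (Nat.mem_divisors.mp hk).1
      have hnk : n / k ≠ 0 := (Nat.div_pos hkn hk1).ne'
      simp [natCoe_apply, zeta_apply, hnk]
  rw [heq] at hconv
  have hπ : (π:ℂ) ≠ 0 := by exact_mod_cast Real.pi_ne_zero
  have : 90 / (π:ℂ) ^ 4 * ((π:ℂ)^2/6) = 15 / (π:ℂ)^2 := by field_simp; ring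
  rwa [this] at hconv

noncomputable def aR : ℕ → ℝ := fun n => (if Squarefree n then 1 else 0 : ℝ) / (n : ℝ) ^ 2

lemma hasSum_aR : HasSum aR (15 / π ^ 2) := by
  rw [← Complex.hasSum_ofReal]
  have h := LSeriesHasSum_sf
  have he : ∀ n, (term (fun n => (if Squarefree n then 1 else 0 : ℂ)) 2 n) = ((aR n : ℝ) : ℂ) := by
    intro n
    rcases eq_or_ne n 0 with rfl | hn
    · simp [aR]
    · rw [term_of_ne_zero hn]
      rw [show (2:ℂ) = ((2:ℕ):ℂ) by norm_num, cpow_natCast]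
      simp only [aR]
      push_cast [apply_ite ((↑) : ℝ → ℂ)]
      ring
    
  have h2 : HasSum (fun n => ((aR n : ℝ) : ℂ)) ((15:ℂ)/(π:ℂ)^2) := by
    have h3 : (term (fun n => (if Squarefree n then 1 else 0 : ℂ)) 2)
        = fun n => ((aR n : ℝ) : ℂ) := funext he
    have := h
    unfold LSeriesHasSum at this
    rwa [h3] at this
  convert h2 using 2
  push_cast
  ring

lemma aR_nonneg (n : ℕ) : 0 ≤ aR n := by
  unfold aR; positivity

lemma aR_le (n : ℕ) : aR n ≤ 1 / (n : ℝ) ^ 2 := by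
  unfold aR
  split
  · exact le_rfl
  · rw [zero_div]
    positivity

lemma hasSum_tele (N : ℕ) (hN : 1 ≤ N) :
    HasSum (fun i : ℕ => 1 / ((N:ℝ) + i) - 1 / ((N:ℝ) + i + 1)) (1 / N) := by
  have hpos : ∀ i : ℕ, (0:ℝ) < (N:ℝ) + i := fun i => by
    have : (1:ℝ) ≤ (N:ℝ) := by exact_mod_cast hN
    positivity
  rw [hasSum_iff_tendsto_nat_of_nonneg]
  · have hsum : ∀ n : ℕ, ∑ i ∈ range n, (1 / ((N:ℝ) + i) - 1 / ((N:ℝ) + i + 1))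
        = 1 / N - 1 / ((N:ℝ) + n) := by
      intro n
      have h := Finset.sum_range_sub' (f := fun i : ℕ => 1 / ((N:ℝ) + i)) n
      have h2 : ∑ i ∈ range n, (1 / ((N:ℝ) + i) - 1 / ((N:ℝ) + i + 1))
          = ∑ i ∈ range n, (1 / ((N:ℝ) + i) - 1 / ((N:ℝ) + ((i+1 : ℕ) : ℝ))) :=
        Finset.sum_congr rfl fun i _ => by push_cast; ring_nf
      rw [h2, h]
      norm_num
    simp only [hsum]
    have h1 : Filter.Tendsto (fun n : ℕ => (N:ℝ) + n) Filter.atTop Filter.atTop :=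
      Filter.tendsto_atTop_add_const_left _ _ tendsto_natCast_atTop_atTop
    have : Filter.Tendsto (fun n : ℕ => 1 / ((N:ℝ) + n)) Filter.atTop (nhds 0) := by
      simp only [one_div]
      exact h1.inv_tendsto_atTop
    simpa using Filter.Tendsto.const_sub (1 / (N:ℝ)) this
  · intro i
    have h1 : (0:ℝ) < (N:ℝ) + i := hpos i
    rw [sub_nonneg]
    exact one_div_le_one_div_of_le h1 (by linarith)

lemma tail_bound (N : ℕ) (hN : 1 ≤ N) :
    |∑ d ∈ Icc 1 N, aR d - 15 / π ^ 2| ≤ (1:ℝ) / N := by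
  have hsummable : Summable aR := hasSum_aR.summable
  have hIcc : ∑ d ∈ Icc 1 N, aR d = ∑ d ∈ range (N+1), aR d := by
    refine Finset.sum_subset ?_ ?_
    · intro x hx
      simp only [mem_Icc, mem_range] at hx ⊢
      omega
    · intro x hx hnx
      simp only [mem_Icc, mem_range] at hx hnx
      have : x = 0 := by omega
      subst this
      simp [aR]
  have hkey := Summable.sum_add_tsum_nat_add (f := aR) (N+1) hsummable
  rw [hasSum_aR.tsum_eq] at hkey
  have htail0 : 0 ≤ ∑' i, aR (i + (N+1)) :=
    tsum_nonneg fun i => aR_nonneg _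
  have htail1 : ∑' i, aR (i + (N+1)) ≤ 1 / N := by
    rw [← (hasSum_tele N hN).tsum_eq]
    refine Summable.tsum_le_tsum ?_ ((summable_nat_add_iff (N+1)).mpr hasSum_aR.summable)
      (hasSum_tele N hN).summable
    intro i
    have h1 : (1:ℝ) ≤ (N:ℝ) := by exact_mod_cast hN
    have h2 : (0:ℝ) < (N:ℝ) + i := by positivity
    refine (aR_le _).trans ?_
    have hc : ((i + (N+1) : ℕ) : ℝ) = (N:ℝ) + i + 1 := by push_cast; ring
    rw [hc, div_sub_div _ _ (by positivity) (by positivity : ((N:ℝ)+i+1) ≠ 0)]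
    rw [div_le_div_iff₀ (by positivity) (by positivity)]
    ring_nf
    nlinarith [sq_nonneg ((N:ℝ)+i)]
  rw [hIcc, abs_le]
  constructor <;> linarith

noncomputable def hh : ℕ → ℝ := fun d => 2 * Real.sqrt d / (d : ℝ) ^ 2

lemma summable_hh : Summable hh := by
  have h1 : Summable (fun d : ℕ => 2 * ((d:ℝ) ^ ((3:ℝ)/2))⁻¹) :=
    (Real.summable_nat_rpow_inv.mpr (by norm_num)).mul_left 2
  refine h1.congr fun d => ?_
  rcases eq_or_ne d 0 with rfl | hd
  · simp [hh, Real.zero_rpow (by norm_num : (3:ℝ)/2 ≠ 0)]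
  · have hd0 : (0:ℝ) < d := by exact_mod_cast Nat.pos_of_ne_zero hd
    calc 2 * ((d:ℝ) ^ ((3:ℝ)/2))⁻¹
        = 2 * (d:ℝ) ^ (-((3:ℝ)/2)) := by rw [← Real.rpow_neg hd0.le]
      _ = 2 * ((d:ℝ) ^ ((1:ℝ)/2) / (d:ℝ) ^ (2:ℝ)) := by
          rw [← Real.rpow_sub hd0]; norm_num
      _ = hh d := by
          unfold hh
          rw [Real.sqrt_eq_rpow, show ((d:ℝ) ^ (2:ℝ)) = (d:ℝ) ^ (2:ℕ) by
            rw [← Real.rpow_natCast (d:ℝ) 2]; norm_num]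
          ring

lemma log_le_two_sqrt {d : ℕ} (hd : 1 ≤ d) : Real.log d ≤ 2 * Real.sqrt d := by
  have hd0 : (0:ℝ) < d := by exact_mod_cast hd
  have h1 : Real.log (Real.sqrt d) ≤ Real.sqrt d - 1 :=
    Real.log_le_sub_one_of_pos (Real.sqrt_pos.mpr hd0)
  have h2 : Real.log (Real.sqrt d) = Real.log d / 2 := Real.log_sqrt hd0.le
  have h3 : (0:ℝ) ≤ Real.sqrt d := Real.sqrt_nonneg _
  linarith

lemma log_sum_bound (N : ℕ) :
    ∑ d ∈ Icc 1 N, aR d * Real.log d ≤ ∑' d, hh d := by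
  have h1 : ∑ d ∈ Icc 1 N, aR d * Real.log d ≤ ∑ d ∈ Icc 1 N, hh d := by
    refine Finset.sum_le_sum fun d hd => ?_
    have hd1 : 1 ≤ d := (mem_Icc.mp hd).1
    have hd0 : (0:ℝ) < d := by exact_mod_cast hd1
    have hlog0 : 0 ≤ Real.log d := Real.log_nonneg (by exact_mod_cast hd1)
    calc aR d * Real.log d ≤ 1 / (d:ℝ)^2 * Real.log d := by
          exact mul_le_mul_of_nonneg_right (aR_le d) hlog0
      _ ≤ 1 / (d:ℝ)^2 * (2 * Real.sqrt d) := by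
          exact mul_le_mul_of_nonneg_left (log_le_two_sqrt hd1) (by positivity)
      _ = hh d := by unfold hh; field_simp
  refine h1.trans (Summable.sum_le_tsum _ (fun d _ => ?_) summable_hh)
  unfold hh; positivity

lemma log_sum_nonneg (N : ℕ) : 0 ≤ ∑ d ∈ Icc 1 N, aR d * Real.log d := by
  refine Finset.sum_nonneg fun d hd => ?_
  have hd1 : 1 ≤ d := (mem_Icc.mp hd).1
  exact mul_nonneg (aR_nonneg d) (Real.log_nonneg (by exact_mod_cast hd1))

lemma harmonic_est {y : ℝ} (hy : 1 ≤ y) :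
    |∑ m ∈ Icc 1 ⌊y⌋₊, (1:ℝ)/m - Real.log y| ≤ 1 := by
  set N := ⌊y⌋₊ with hNdef
  have hy0 : (0:ℝ) < y := by linarith
  have hN1 : 1 ≤ N := Nat.le_floor (by exact_mod_cast hy)
  have hNy : (N:ℝ) ≤ y := Nat.floor_le hy0.le
  have hyN : y < N + 1 := Nat.lt_floor_add_one y
  have hsum : ∑ m ∈ Icc 1 N, (1:ℝ)/m = (harmonic N : ℝ) := by
    rw [harmonic_eq_sum_Icc]
    push_cast
    exact Finset.sum_congr rfl fun m _ => (one_div _)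
  have hlow : Real.log y ≤ (harmonic N : ℝ) := by
    refine le_trans ?_ (log_add_one_le_harmonic N)
    have : y ≤ ((N:ℝ) + 1) := hyN.le
    calc Real.log y ≤ Real.log ((N:ℝ)+1) := Real.log_le_log hy0 this
      _ = Real.log ((N+1 : ℕ):ℝ) := by push_cast; ring_nf
  have hup : (harmonic N : ℝ) ≤ 1 + Real.log y := by
    refine (harmonic_le_one_add_log N).trans ?_
    have hN0 : (0:ℝ) < N := by exact_mod_cast hN1
    have : Real.log N ≤ Real.log y := Real.log_le_log hN0 hNy
    linarith
  rw [hsum, abs_le]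
  constructor <;> linarith

open Filter Asymptotics

theorem sum_squarefree_harmonic :
    (fun x : ℝ => x * ∑ d ∈ Finset.Icc 1 ⌊x⌋₊,
        (if Squarefree d then 1 else 0 : ℝ) / (d : ℝ) ^ 2 *
        ∑ m ∈ Finset.Icc 1 ⌊x / (d : ℝ)⌋₊, (1 : ℝ) / m -
      (15 / Real.pi ^ 2) * x * Real.log x) =O[atTop] (fun x : ℝ => x) := by
  rw [isBigO_iff]
  refine ⟨(∑' d, hh d) + 5, ?_⟩
  filter_upwards [eventually_ge_atTop (2:ℝ)] with x hx
  have hx0 : (0:ℝ) < x := by linarith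
  set N := ⌊x⌋₊ with hNdef
  have hN1 : 1 ≤ N := Nat.le_floor (by exact_mod_cast (by linarith : (1:ℝ) ≤ x))
  have hNx : (N:ℝ) ≤ x := Nat.floor_le hx0.le
  have hxN : x < N + 1 := Nat.lt_floor_add_one x
  have hNhalf : x / 2 ≤ (N:ℝ) := by
    have : (1:ℝ) ≤ N := by exact_mod_cast hN1
    linarith
  have haR : ∀ d : ℕ, (if Squarefree d then 1 else 0 : ℝ) / (d : ℝ) ^ 2 = aR d :=
    fun d => rfl
  simp only [haR]
  set H : ℕ → ℝ := fun d => ∑ m ∈ Icc 1 ⌊x / (d:ℝ)⌋₊, (1:ℝ)/m with hHdef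
  set A := ∑ d ∈ Icc 1 N, aR d with hAdef
  set B := ∑ d ∈ Icc 1 N, aR d * Real.log d with hBdef
  set R := ∑ d ∈ Icc 1 N, aR d * (H d - Real.log (x / d)) with hRdef
  have hS : ∑ d ∈ Icc 1 N, aR d * H d = A * Real.log x - B + R := by
    rw [hAdef, hBdef, hRdef, Finset.sum_mul, ← Finset.sum_sub_distrib, ← Finset.sum_add_distrib]
    refine Finset.sum_congr rfl fun d hd => ?_
    have hd1 : 1 ≤ d := (mem_Icc.mp hd).1
    have hd0 : (0:ℝ) < d := by exact_mod_cast hd1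
    have hlogdiv : Real.log (x / d) = Real.log x - Real.log d :=
      Real.log_div hx0.ne' hd0.ne'
    rw [hlogdiv]
    ring
  -- bound on A - 15/π²
  have hA := tail_bound N hN1
  have hNinv : (1:ℝ)/N ≤ 2/x := by
    rw [div_le_div_iff₀ (by exact_mod_cast hN1) hx0]
    linarith
  -- bound on R
  have hRbound : |R| ≤ A := by
    rw [hRdef, hAdef]
    refine (Finset.abs_sum_le_sum_abs _ _).trans (Finset.sum_le_sum fun d hd => ?_)
    rw [abs_mul, _root_.abs_of_nonneg (aR_nonneg d)]
    have hd1 : 1 ≤ d := (mem_Icc.mp hd).1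
    have hdN : d ≤ N := (mem_Icc.mp hd).2
    have hd0 : (0:ℝ) < d := by exact_mod_cast hd1
    have hxd : 1 ≤ x / d := by
      rw [le_div_iff₀ hd0]
      have : (d:ℝ) ≤ N := by exact_mod_cast hdN
      linarith
    have := harmonic_est hxd
    calc aR d * |H d - Real.log (x/d)| ≤ aR d * 1 :=
          mul_le_mul_of_nonneg_left this (aR_nonneg d)
      _ = aR d := mul_one _
  have hAbound : A ≤ 3 := by
    have hpi : (3:ℝ) ≤ π := by
      have := Real.pi_gt_three
      linarith
    have h15 : 15 / π^2 ≤ 2 := by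
      rw [div_le_iff₀ (by positivity)]
      nlinarith
    have h1N : (1:ℝ)/N ≤ 1 := by
      rw [div_le_one (by exact_mod_cast hN1)]
      exact_mod_cast hN1
    have := abs_le.mp hA
    linarith
  have hBlow := log_sum_nonneg N
  have hBhigh := log_sum_bound N
  have hlogx0 : 0 ≤ Real.log x := Real.log_nonneg (by linarith)
  have hlogxx : Real.log x ≤ x := by
    have := Real.log_le_sub_one_of_pos hx0
    linarith
  have hmain : |∑ d ∈ Icc 1 N, aR d * H d - 15/π^2 * Real.log x| ≤ (∑' d, hh d) + 5 := by
    rw [hS]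
    have h1 : |(A - 15/π^2) * Real.log x| ≤ 2 := by
      rw [abs_mul, _root_.abs_of_nonneg hlogx0]
      calc |A - 15/π^2| * Real.log x ≤ (2/x) * x := by
            exact mul_le_mul (hA.trans hNinv) hlogxx hlogx0 (by positivity)
        _ = 2 := by field_simp
    have heq : A * Real.log x - B + R - 15/π^2 * Real.log x
        = (A - 15/π^2) * Real.log x - B + R := by ring
    rw [heq]
    have := abs_le.mp h1
    have hRabs := abs_le.mp hRbound
    rw [abs_le]
    constructor <;> linarith
  have hgoal : x * (∑ d ∈ Icc 1 N, aR d * H d) - 15/π^2 * x * Real.log x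
      = x * ((∑ d ∈ Icc 1 N, aR d * H d) - 15/π^2 * Real.log x) := by ring
  rw [Real.norm_eq_abs, Real.norm_eq_abs, hgoal, abs_mul, _root_.abs_of_nonneg hx0.le]
  calc x * |(∑ d ∈ Icc 1 N, aR d * H d) - 15/π^2 * Real.log x|
      ≤ x * ((∑' d, hh d) + 5) := mul_le_mul_of_nonneg_left hmain hx0.le
    _ = ((∑' d, hh d) + 5) * x := mul_comm _ _

end aux
end
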